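/- arXiv:0711.3451 — 2 statements merged into one kernel-verified Lean document; each statement's English description precedes it below -/
import Mathlib

section
/- Let w ∈ A₂^d and let {λ_I}_{I∈D} be a sequence of nonnegative numbers that is Carleson with constant Q, i.e. (1/|J|) Σ_{I∈D(J)} λ_I ≤ Q for every J ∈ D. Then for every J ∈ D, (1/|J|) Σ_{I∈D(J)} (m_I w) λ_I ≤ 4 Q · ‖w‖_{A₂^d} · m_J w. -/
open MeasureTheory Set

noncomputable section

/-- The dyadic interval `[k 2^{-j}, (k+1) 2^{-j})`, indexed by `I = (j, k)`. -/
def dyadicI (I : ℤ × ℤ) : Set ℝ :=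
  Set.Ico ((I.2 : ℝ) * 2 ^ (-I.1)) (((I.2 : ℝ) + 1) * 2 ^ (-I.1))

/-- The length `|I| = 2^{-j}` of the dyadic interval indexed by `I = (j, k)`. -/
def len (I : ℤ × ℤ) : ℝ := 2 ^ (-I.1)

/-- The left half `I⁺` of the dyadic interval `I`. -/
def leftHalf (I : ℤ × ℤ) : ℤ × ℤ := (I.1 + 1, 2 * I.2)

/-- The right half `I⁻` of the dyadic interval `I`. -/
def rightHalf (I : ℤ × ℤ) : ℤ × ℤ := (I.1 + 1, 2 * I.2 + 1)

/-- The average `m_I f = (1/|I|) ∫_I f`. -/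
def avg (f : ℝ → ℝ) (I : ℤ × ℤ) : ℝ := (len I)⁻¹ * ∫ x in dyadicI I, f x

/-- The Haar function `h_I = |I|^{-1/2} (χ_{I⁺} - χ_{I⁻})`. -/
def haar (I : ℤ × ℤ) (x : ℝ) : ℝ :=
  (Real.sqrt (len I))⁻¹ *
    ((dyadicI (leftHalf I)).indicator (fun _ => (1 : ℝ)) x -
      (dyadicI (rightHalf I)).indicator (fun _ => (1 : ℝ)) x)

/-- The Haar coefficient `b_I = ⟨b, h_I⟩`. -/
def haarCoef (b : ℝ → ℝ) (I : ℤ × ℤ) : ℝ := ∫ x, b x * haar I x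

/-- The dyadic BMO norm of `b`. -/
def bmoNorm (b : ℝ → ℝ) : ℝ :=
  Real.sqrt (⨆ I : ℤ × ℤ, (len I)⁻¹ * ∫ x in dyadicI I, (b x - avg b I) ^ 2)

/-- The `A₂^d` characteristic `‖w‖_{A₂^d} = sup_I (m_I w)(m_I w⁻¹)`. -/
def A2const (w : ℝ → ℝ) : ℝ :=
  ⨆ I : ℤ × ℤ, avg w I * avg (fun x => (w x)⁻¹) I

lemma len_pos (I : ℤ × ℤ) : 0 < len I := by
  unfold len; positivity

lemma dyadic_lt (I : ℤ × ℤ) : (I.2 : ℝ) * 2 ^ (-I.1) < ((I.2 : ℝ) + 1) * 2 ^ (-I.1) := by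
  have : (0:ℝ) < 2 ^ (-I.1) := by positivity
  nlinarith

lemma dyadic_nonempty (I : ℤ × ℤ) : (dyadicI I).Nonempty :=
  Set.nonempty_Ico.2 (dyadic_lt I)

lemma endpoint_le (I K : ℤ × ℤ) (h : dyadicI I ⊆ dyadicI K) :
    (K.2 : ℝ) * 2 ^ (-K.1) ≤ (I.2 : ℝ) * 2 ^ (-I.1) ∧
    ((I.2 : ℝ) + 1) * 2 ^ (-I.1) ≤ ((K.2 : ℝ) + 1) * 2 ^ (-K.1) := by
  set a := (I.2 : ℝ) * 2 ^ (-I.1)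
  set b := ((I.2 : ℝ) + 1) * 2 ^ (-I.1)
  set c := (K.2 : ℝ) * 2 ^ (-K.1)
  set d := ((K.2 : ℝ) + 1) * 2 ^ (-K.1)
  have ha : a ∈ Set.Ico c d := h ⟨le_refl a, dyadic_lt I⟩
  refine ⟨ha.1, ?_⟩
  by_contra hbd
  push_neg at hbd
  have hd : d ∈ Set.Ico a b := ⟨le_of_lt ha.2, hbd⟩
  exact absurd (h hd).2 (lt_irrefl d)

lemma len_le_of_subset {I K : ℤ × ℤ} (h : dyadicI I ⊆ dyadicI K) : len I ≤ len K := by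
  obtain ⟨h1, h2⟩ := endpoint_le I K h
  unfold len
  nlinarith

lemma scale_le_of_subset {I K : ℤ × ℤ} (h : dyadicI I ⊆ dyadicI K) : K.1 ≤ I.1 := by
  have := len_le_of_subset h
  unfold len at this
  have h2 : -I.1 ≤ -K.1 := by
    by_contra hc
    push_neg at hc
    have := zpow_lt_zpow_right₀ (by norm_num : (1:ℝ) < 2) hc
    linarith
  linarith

lemma eq_of_subset_scale_eq {I K : ℤ × ℤ} (h : dyadicI I ⊆ dyadicI K) (hj : I.1 = K.1) :
    I = K := by
  obtain ⟨h1, h2⟩ := endpoint_le I K h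
  rw [hj] at h1 h2
  have hp : (0:ℝ) < 2 ^ (-K.1) := by positivity
  have hk : (K.2 : ℝ) = I.2 := by
    have hle : (K.2 : ℝ) ≤ I.2 := le_of_mul_le_mul_right h1 hp
    have hge : (I.2 : ℝ) ≤ K.2 := by
      have : ((I.2:ℝ) + 1) ≤ (K.2:ℝ) + 1 := le_of_mul_le_mul_right h2 hp
      linarith
    linarith
  have : K.2 = I.2 := by exact_mod_cast hk
  exact Prod.ext hj this.symm

lemma two_zpow_neg_succ (j : ℤ) : (2:ℝ) ^ (-(j+1)) = 2 ^ (-j) * 2⁻¹ := by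
  rw [show -(j+1) = -j + (-1) by ring, zpow_add₀ (by norm_num : (2:ℝ) ≠ 0)]
  norm_num

lemma leftHalf_eq (K : ℤ × ℤ) :
    dyadicI (leftHalf K) = Set.Ico ((K.2 : ℝ) * 2 ^ (-K.1))
      (((2 * K.2 : ℤ) + 1 : ℝ) * (2 ^ (-K.1) * 2⁻¹)) := by
  unfold dyadicI leftHalf
  rw [two_zpow_neg_succ]
  have h1 : ((2 * K.2 : ℤ) : ℝ) * (2 ^ (-K.1) * 2⁻¹) = (K.2 : ℝ) * 2 ^ (-K.1) := by
    push_cast; ring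
  rw [h1]

lemma rightHalf_eq (K : ℤ × ℤ) :
    dyadicI (rightHalf K) = Set.Ico (((2 * K.2 : ℤ) + 1 : ℝ) * (2 ^ (-K.1) * 2⁻¹))
      (((K.2 : ℝ) + 1) * 2 ^ (-K.1)) := by
  unfold dyadicI rightHalf
  rw [two_zpow_neg_succ]
  have h1 : ((2 * K.2 + 1 : ℤ) : ℝ) * (2 ^ (-K.1) * 2⁻¹) = ((2 * K.2 : ℤ) + 1 : ℝ) * (2 ^ (-K.1) * 2⁻¹) := by
    push_cast; ring
  have h2 : (((2 * K.2 + 1 : ℤ) : ℝ) + 1) * (2 ^ (-K.1) * 2⁻¹) = ((K.2 : ℝ) + 1) * 2 ^ (-K.1) := by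
    push_cast; ring
  rw [h1, h2]

lemma halves_union (K : ℤ × ℤ) :
    dyadicI (leftHalf K) ∪ dyadicI (rightHalf K) = dyadicI K := by
  rw [leftHalf_eq, rightHalf_eq]
  apply Set.Ico_union_Ico_eq_Ico
  · have hp : (0:ℝ) < 2 ^ (-K.1) := by positivity
    push_cast
    nlinarith
  · have hp : (0:ℝ) < 2 ^ (-K.1) := by positivity
    push_cast
    nlinarith

lemma halves_disjoint (K : ℤ × ℤ) :
    Disjoint (dyadicI (leftHalf K)) (dyadicI (rightHalf K)) := by
  rw [leftHalf_eq, rightHalf_eq]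
  exact Set.Ico_disjoint_Ico_same

lemma scale_lt_of_subset_half {I K : ℤ × ℤ} (h : dyadicI I ⊆ dyadicI (leftHalf K) ∨
    dyadicI I ⊆ dyadicI (rightHalf K)) : K.1 + 1 ≤ I.1 := by
  rcases h with h | h
  · have := scale_le_of_subset h; simpa [leftHalf] using this
  · have := scale_le_of_subset h; simpa [rightHalf] using this

lemma dyadic_trichotomy {I K : ℤ × ℤ} (h : dyadicI I ⊆ dyadicI K) :
    I = K ∨ dyadicI I ⊆ dyadicI (leftHalf K) ∨ dyadicI I ⊆ dyadicI (rightHalf K) := by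
  rcases eq_or_ne I.1 K.1 with hj | hj
  · exact Or.inl (eq_of_subset_scale_eq h hj)
  · right
    have hle : K.1 ≤ I.1 := scale_le_of_subset h
    have hlt : K.1 + 1 ≤ I.1 := lt_of_le_of_ne hle (Ne.symm hj)
    set δ : ℝ := 2 ^ (-I.1) with hδ
    have hδpos : (0:ℝ) < δ := by positivity
    set n : ℕ := (I.1 - K.1 - 1).toNat with hn
    have hn' : (n : ℤ) = I.1 - K.1 - 1 := Int.toNat_of_nonneg (by omega)
    set M : ℤ := (2 * K.2 + 1) * 2 ^ n with hM
    have hm : ((2 * K.2 : ℤ) + 1 : ℝ) * (2 ^ (-K.1) * 2⁻¹) = (M : ℝ) * δ := by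
      have h2 : (2:ℝ) ^ (-K.1) * 2⁻¹ = 2 ^ (n:ℤ) * δ := by
        rw [hδ, show -K.1 = ((n:ℤ) + (-I.1)) + 1 by omega,
          zpow_add₀ (by norm_num : (2:ℝ) ≠ 0), zpow_add₀ (by norm_num : (2:ℝ) ≠ 0)]
        norm_num
        ring
      rw [h2, hM]
      push_cast
      rw [zpow_natCast]
      ring
    obtain ⟨hca, hbd⟩ := endpoint_le I K h
    rcases lt_or_ge ((I.2:ℝ) * δ) ((M:ℝ) * δ) with hx | hx
    · left
      rw [leftHalf_eq, hm]
      have hIM : I.2 < M := by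
        have := lt_of_mul_lt_mul_right hx hδpos.le
        exact_mod_cast this
      have hb : ((I.2:ℝ) + 1) * δ ≤ (M:ℝ) * δ := by
        have : ((I.2:ℝ) + 1) ≤ (M:ℝ) := by exact_mod_cast hIM
        nlinarith
      exact Set.Ico_subset_Ico hca hb
    · right
      rw [rightHalf_eq, hm]
      exact Set.Ico_subset_Ico hx hbd

lemma measurableSet_dyadicI (I : ℤ × ℤ) : MeasurableSet (dyadicI I) :=
  measurableSet_Ico

lemma volume_dyadicI (I : ℤ × ℤ) : volume (dyadicI I) = ENNReal.ofReal (len I) := by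
  unfold dyadicI
  rw [Real.volume_Ico]
  congr 1
  unfold len
  ring

lemma setIntegral_one_dyadic (I : ℤ × ℤ) : ∫ _x in dyadicI I, (1:ℝ) = len I := by
  rw [setIntegral_const, measureReal_def, volume_dyadicI, ENNReal.toReal_ofReal (len_pos I).le,
    smul_eq_mul, mul_one]

lemma subset_leftHalf (K : ℤ × ℤ) : dyadicI (leftHalf K) ⊆ dyadicI K := by
  rw [← halves_union K]; exact Set.subset_union_left

lemma subset_rightHalf (K : ℤ × ℤ) : dyadicI (rightHalf K) ⊆ dyadicI K := by
  rw [← halves_union K]; exact Set.subset_union_right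

lemma len_leftHalf (K : ℤ × ℤ) : len (leftHalf K) = len K / 2 := by
  unfold len leftHalf
  rw [two_zpow_neg_succ]
  ring

lemma len_rightHalf (K : ℤ × ℤ) : len (rightHalf K) = len K / 2 := by
  unfold len rightHalf
  rw [two_zpow_neg_succ]
  ring

lemma integral_halves {g : ℝ → ℝ} (K : ℤ × ℤ) (hg : IntegrableOn g (dyadicI K)) :
    ∫ x in dyadicI K, g x
      = (∫ x in dyadicI (leftHalf K), g x) + ∫ x in dyadicI (rightHalf K), g x := by
  rw [← halves_union K]
  exact setIntegral_union (halves_disjoint K) (measurableSet_dyadicI _)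
    (hg.mono_set (subset_leftHalf K)) (hg.mono_set (subset_rightHalf K))

lemma avg_halves {g : ℝ → ℝ} (K : ℤ × ℤ) (hg : IntegrableOn g (dyadicI K)) :
    avg g K = (avg g (leftHalf K) + avg g (rightHalf K)) / 2 := by
  unfold avg
  rw [integral_halves K hg, len_leftHalf, len_rightHalf]
  have h := (len_pos K).ne'
  field_simp

lemma cs_integral {A : Set ℝ} {f g : ℝ → ℝ}
    (hf0 : ∀ x, 0 ≤ f x) (hg0 : ∀ x, 0 ≤ g x)
    (hfm : AEStronglyMeasurable f (volume.restrict A))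
    (hgm : AEStronglyMeasurable g (volume.restrict A))
    (hf2 : IntegrableOn (fun x => f x ^ 2) A volume)
    (hg2 : IntegrableOn (fun x => g x ^ 2) A volume) :
    (∫ x in A, f x * g x) ^ 2 ≤ (∫ x in A, f x ^ 2) * ∫ x in A, g x ^ 2 := by
  have hconj : Real.HolderConjugate 2 2 := Real.HolderConjugate.two_two
  have hof : (ENNReal.ofReal 2) = 2 := by norm_num
  have hfL : MemLp f (ENNReal.ofReal 2) (volume.restrict A) := by
    rw [hof]; exact (memLp_two_iff_integrable_sq hfm).2 hf2
  have hgL : MemLp g (ENNReal.ofReal 2) (volume.restrict A) := by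
    rw [hof]; exact (memLp_two_iff_integrable_sq hgm).2 hg2
  have h := MeasureTheory.integral_mul_le_Lp_mul_Lq_of_nonneg hconj
    (Filter.Eventually.of_forall fun x => hf0 x)
    (Filter.Eventually.of_forall fun x => hg0 x) hfL hgL
  have hrw : ∀ x : ℝ, x ^ (2:ℝ) = x ^ (2:ℕ) := fun x => by
    rw [show (2:ℝ) = ((2:ℕ):ℝ) by norm_num, Real.rpow_natCast]
  simp only [hrw] at h
  have hF : 0 ≤ ∫ x in A, f x ^ 2 :=
    integral_nonneg fun x => by positivity
  have hG : 0 ≤ ∫ x in A, g x ^ 2 :=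
    integral_nonneg fun x => by positivity
  have hfg : 0 ≤ ∫ x in A, f x * g x :=
    integral_nonneg fun x => mul_nonneg (hf0 x) (hg0 x)
  have hs : ((∫ x in A, f x ^ 2) ^ (1/2:ℝ) * (∫ x in A, g x ^ 2) ^ (1/2:ℝ)) ^ 2
      = (∫ x in A, f x ^ 2) * ∫ x in A, g x ^ 2 := by
    rw [mul_pow, ← Real.sqrt_eq_rpow, ← Real.sqrt_eq_rpow, Real.sq_sqrt hF, Real.sq_sqrt hG]
  calc (∫ x in A, f x * g x) ^ 2
      ≤ ((∫ x in A, f x ^ 2) ^ (1/2:ℝ) * (∫ x in A, g x ^ 2) ^ (1/2:ℝ)) ^ 2 := by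
        apply pow_le_pow_left₀ hfg h
    _ = _ := hs

lemma integrableOn_dyadic {g : ℝ → ℝ} (hg : LocallyIntegrable g volume) (I : ℤ × ℤ) :
    IntegrableOn g (dyadicI I) volume :=
  (hg.integrableOn_isCompact isCompact_Icc).mono_set Set.Ico_subset_Icc_self

lemma volume_dyadic_lt_top (I : ℤ × ℤ) : volume (dyadicI I) < ⊤ := by
  rw [volume_dyadicI]; exact ENNReal.ofReal_lt_top

lemma integrableOn_sqrt {g : ℝ → ℝ} {I : ℤ × ℤ} (hg0 : ∀ x, 0 ≤ g x)
    (hgi : IntegrableOn g (dyadicI I) volume) :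
    IntegrableOn (fun x => Real.sqrt (g x)) (dyadicI I) volume := by
  have hb : Integrable (fun x => g x + 1) (volume.restrict (dyadicI I)) :=
    hgi.add (integrableOn_const (volume_dyadic_lt_top I).ne)
  refine hb.mono' (Real.continuous_sqrt.comp_aestronglyMeasurable hgi.aestronglyMeasurable) ?_
  refine Filter.Eventually.of_forall fun x => ?_
  rw [Real.norm_of_nonneg (Real.sqrt_nonneg _)]
  nlinarith [Real.sq_sqrt (hg0 x), Real.sqrt_nonneg (g x), sq_nonneg (Real.sqrt (g x) - 1)]

lemma avg_nonneg {g : ℝ → ℝ} (hg0 : ∀ x, 0 ≤ g x) (I : ℤ × ℤ) : 0 ≤ avg g I :=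
  mul_nonneg (inv_nonneg.2 (len_pos I).le) (integral_nonneg fun x => hg0 x)

section weight

variable {w : ℝ → ℝ} (hwpos : ∀ x, 0 < w x)
  (hwloc : LocallyIntegrable w volume)
  (hwinvloc : LocallyIntegrable (fun x => (w x)⁻¹) volume)
  (hA2 : BddAbove (Set.range fun I : ℤ × ℤ => avg w I * avg (fun x => (w x)⁻¹) I))

include hwpos hwloc hwinvloc hA2 in
lemma avgw_le (I : ℤ × ℤ) :
    avg w I ≤ A2const w * (avg (fun x => Real.sqrt (w x)) I) ^ 2 := by
  set L := len I with hLdef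
  have hL : 0 < L := len_pos I
  have hwm := (integrableOn_dyadic hwloc I).aestronglyMeasurable
  have hwim := (integrableOn_dyadic hwinvloc I).aestronglyMeasurable
  -- CS1 : with f = (w)^{1/4}, g = (w⁻¹)^{1/4}
  have cs1 := cs_integral (A := dyadicI I)
    (f := fun x => Real.sqrt (Real.sqrt (w x)))
    (g := fun x => Real.sqrt (Real.sqrt ((w x)⁻¹)))
    (fun x => Real.sqrt_nonneg _) (fun x => Real.sqrt_nonneg _)
    ((Real.continuous_sqrt.comp Real.continuous_sqrt).comp_aestronglyMeasurable hwm)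
    ((Real.continuous_sqrt.comp Real.continuous_sqrt).comp_aestronglyMeasurable hwim)
    (by
      have he : (fun x => Real.sqrt (Real.sqrt (w x)) ^ 2) = fun x => Real.sqrt (w x) :=
        funext fun x => Real.sq_sqrt (Real.sqrt_nonneg _)
      rw [he]
      exact integrableOn_sqrt (fun x => (hwpos x).le) (integrableOn_dyadic hwloc I))
    (by
      have he : (fun x => Real.sqrt (Real.sqrt ((w x)⁻¹)) ^ 2) = fun x => Real.sqrt ((w x)⁻¹) :=
        funext fun x => Real.sq_sqrt (Real.sqrt_nonneg _)
      rw [he]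
      exact integrableOn_sqrt (fun x => inv_nonneg.2 (hwpos x).le) (integrableOn_dyadic hwinvloc I))
  have hone : ∀ x, Real.sqrt (Real.sqrt (w x)) * Real.sqrt (Real.sqrt ((w x)⁻¹)) = 1 := by
    intro x
    rw [Real.sqrt_inv, Real.sqrt_inv]
    exact mul_inv_cancel₀ (ne_of_gt (Real.sqrt_pos.2 (Real.sqrt_pos.2 (hwpos x))))
  have hXY : L ^ 2 ≤ (∫ x in dyadicI I, Real.sqrt (w x)) *
      ∫ x in dyadicI I, Real.sqrt ((w x)⁻¹) := by
    have h1 : (∫ x in dyadicI I,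
        Real.sqrt (Real.sqrt (w x)) * Real.sqrt (Real.sqrt ((w x)⁻¹))) = L := by
      rw [show (fun x => Real.sqrt (Real.sqrt (w x)) * Real.sqrt (Real.sqrt ((w x)⁻¹)))
          = fun _ => (1:ℝ) from funext hone]
      exact setIntegral_one_dyadic I
    have h2 : (fun x => Real.sqrt (Real.sqrt (w x)) ^ 2) = fun x => Real.sqrt (w x) :=
      funext fun x => Real.sq_sqrt (Real.sqrt_nonneg _)
    have h3 : (fun x => Real.sqrt (Real.sqrt ((w x)⁻¹)) ^ 2) = fun x => Real.sqrt ((w x)⁻¹) :=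
      funext fun x => Real.sq_sqrt (Real.sqrt_nonneg _)
    calc L ^ 2 = (∫ x in dyadicI I,
          Real.sqrt (Real.sqrt (w x)) * Real.sqrt (Real.sqrt ((w x)⁻¹))) ^ 2 := by rw [h1]
      _ ≤ _ := by
          have := cs1
          simp only [h2, h3] at this ⊢
          exact this
  -- CS2 : with f = sqrt (w⁻¹), g = 1
  have cs2 := cs_integral (A := dyadicI I)
    (f := fun x => Real.sqrt ((w x)⁻¹)) (g := fun _ => (1:ℝ))
    (fun x => Real.sqrt_nonneg _) (fun _ => zero_le_one)
    (Real.continuous_sqrt.comp_aestronglyMeasurable hwim)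
    aestronglyMeasurable_const
    (by
      have he : (fun x => Real.sqrt ((w x)⁻¹) ^ 2) = fun x => (w x)⁻¹ :=
        funext fun x => Real.sq_sqrt (inv_nonneg.2 (hwpos x).le)
      rw [he]
      exact integrableOn_dyadic hwinvloc I)
    (by
      have he : (fun x : ℝ => (1:ℝ) ^ 2) = fun _ => (1:ℝ) := by funext x; norm_num
      rw [he]
      exact integrableOn_const (volume_dyadic_lt_top I).ne)
  have hYV : (∫ x in dyadicI I, Real.sqrt ((w x)⁻¹)) ^ 2
      ≤ (∫ x in dyadicI I, (w x)⁻¹) * L := by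
    have h2 : (fun x => Real.sqrt ((w x)⁻¹) ^ 2) = fun x => (w x)⁻¹ :=
      funext fun x => Real.sq_sqrt (inv_nonneg.2 (hwpos x).le)
    have h3 : (fun x : ℝ => (1:ℝ) ^ 2) = fun _ => (1:ℝ) := by funext x; norm_num
    simp only [mul_one, h2, h3] at cs2
    calc (∫ x in dyadicI I, Real.sqrt ((w x)⁻¹)) ^ 2 ≤ _ := cs2
      _ = (∫ x in dyadicI I, (w x)⁻¹) * L := by rw [setIntegral_one_dyadic I]
  -- A2 bound
  have hA2b : avg w I * avg (fun x => (w x)⁻¹) I ≤ A2const w := le_ciSup hA2 I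
  -- averages
  set m := avg w I with hm
  set xb := avg (fun x => Real.sqrt (w x)) I with hxb
  set yb := avg (fun x => Real.sqrt ((w x)⁻¹)) I with hyb
  set vb := avg (fun x => (w x)⁻¹) I with hvb
  have hm0 : 0 ≤ m := avg_nonneg (fun x => (hwpos x).le) I
  have hx0 : 0 ≤ xb := avg_nonneg (fun x => Real.sqrt_nonneg _) I
  have hy0 : 0 ≤ yb := avg_nonneg (fun x => Real.sqrt_nonneg _) I
  have hv0 : 0 ≤ vb := avg_nonneg (fun x => inv_nonneg.2 (hwpos x).le) I
  have e1 : L⁻¹ * L⁻¹ * L ^ 2 = 1 := by field_simp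
  have h1 : 1 ≤ xb * yb := by
    calc (1:ℝ) = L⁻¹ * L⁻¹ * L ^ 2 := e1.symm
      _ ≤ L⁻¹ * L⁻¹ * ((∫ x in dyadicI I, Real.sqrt (w x)) *
          ∫ x in dyadicI I, Real.sqrt ((w x)⁻¹)) :=
        mul_le_mul_of_nonneg_left hXY (by positivity)
      _ = xb * yb := by rw [hxb, hyb]; unfold avg; rw [← hLdef]; ring
  have h2 : yb ^ 2 ≤ vb := by
    have h := mul_le_mul_of_nonneg_left hYV (by positivity : (0:ℝ) ≤ L⁻¹ * L⁻¹)
    calc yb ^ 2 = L⁻¹ * L⁻¹ * (∫ x in dyadicI I, Real.sqrt ((w x)⁻¹)) ^ 2 := by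
          rw [hyb]; unfold avg; rw [← hLdef]; ring
      _ ≤ L⁻¹ * L⁻¹ * ((∫ x in dyadicI I, (w x)⁻¹) * L) := h
      _ = (L⁻¹ * L) * (L⁻¹ * ∫ x in dyadicI I, (w x)⁻¹) := by ring
      _ = vb := by rw [inv_mul_cancel₀ hL.ne', one_mul, hvb]; rfl
  have h3 : m * vb ≤ A2const w := hA2b
  -- conclude : m ≤ A2 * xb^2
  have hA20 : 0 ≤ A2const w := le_trans (mul_nonneg hm0 hv0) h3
  have step1 : m * yb ^ 2 ≤ A2const w :=
    le_trans (mul_le_mul_of_nonneg_left h2 hm0) h3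
  have t1 : m * 1 ≤ m * (xb * yb) := mul_le_mul_of_nonneg_left h1 hm0
  have t2 : m * (xb * yb) * 1 ≤ m * (xb * yb) * (xb * yb) :=
    mul_le_mul_of_nonneg_left h1 (mul_nonneg hm0 (mul_nonneg hx0 hy0))
  have step2 : m ≤ m * (xb * yb) ^ 2 := by
    calc m = m * 1 := by ring
      _ ≤ m * (xb * yb) := t1
      _ = m * (xb * yb) * 1 := by ring
      _ ≤ m * (xb * yb) * (xb * yb) := t2
      _ = m * (xb * yb) ^ 2 := by ring
  calc m ≤ m * (xb * yb) ^ 2 := step2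
    _ = xb ^ 2 * (m * yb ^ 2) := by ring
    _ ≤ xb ^ 2 * A2const w := mul_le_mul_of_nonneg_left step1 (sq_nonneg _)
    _ = A2const w * xb ^ 2 := by ring

end weight

lemma sq_avg_le {f : ℝ → ℝ} {K : ℤ × ℤ} (hf0 : ∀ x, 0 ≤ f x)
    (hfi : IntegrableOn f (dyadicI K) volume)
    (hf2i : IntegrableOn (fun x => f x ^ 2) (dyadicI K) volume) :
    len K * (avg f K) ^ 2 ≤ ∫ x in dyadicI K, f x ^ 2 := by
  set L := len K with hLdef
  have hL : 0 < L := len_pos K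
  have cs := cs_integral (A := dyadicI K) (f := f) (g := fun _ => (1:ℝ))
    hf0 (fun _ => zero_le_one) hfi.aestronglyMeasurable aestronglyMeasurable_const
    hf2i
    (by
      have he : (fun x : ℝ => (1:ℝ) ^ 2) = fun _ => (1:ℝ) := by funext x; norm_num
      rw [he]
      exact integrableOn_const (volume_dyadic_lt_top K).ne)
  simp only [mul_one, one_pow] at cs
  rw [setIntegral_one_dyadic K, ← hLdef] at cs
  have e1 : L * (avg f K) ^ 2 = L⁻¹ * L⁻¹ * L * (∫ x in dyadicI K, f x) ^ 2 := by
    unfold avg; rw [← hLdef]; ring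
  calc L * (avg f K) ^ 2
      = L⁻¹ * L⁻¹ * L * (∫ x in dyadicI K, f x) ^ 2 := e1
    _ ≤ L⁻¹ * L⁻¹ * L * ((∫ x in dyadicI K, f x ^ 2) * L) := by
        apply mul_le_mul_of_nonneg_left cs (by positivity)
    _ = (L⁻¹ * L) * (L⁻¹ * L) * (∫ x in dyadicI K, f x ^ 2) := by ring
    _ = ∫ x in dyadicI K, f x ^ 2 := by rw [inv_mul_cancel₀ hL.ne']; ring

lemma engel {x y p q : ℝ} (hp : 0 < p) (hq : 0 < q) :
    (x + y) ^ 2 / (p + q) ≤ x ^ 2 / p + y ^ 2 / q := by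
  rw [div_add_div _ _ (ne_of_gt hp) (ne_of_gt hq), div_le_div_iff₀ (by positivity) (by positivity)]
  nlinarith [sq_nonneg (x * q - y * p)]

lemma frac_key {a l : ℝ} (ha : 0 ≤ a) (hal : a ≤ l) (hl : l ≤ 1) :
    a / 4 + 1 / (1 + l) ≤ 1 / (1 + l - a) := by
  have h1 : (0:ℝ) < 1 + l := by linarith
  have h2 : (0:ℝ) < 1 + l - a := by linarith
  rw [div_add_div _ _ (by norm_num) (ne_of_gt h1), div_le_div_iff₀ (by positivity) h2]
  nlinarith [mul_nonneg ha (by nlinarith : (0:ℝ) ≤ 4 - (1 + l) * (1 + l - a))]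

lemma base_arith {Q L a b F : ℝ} (hQ : 0 < Q) (hL : 0 < L) (ha : 0 ≤ a)
    (hab : a ≤ Q * L) (hb : 0 ≤ b) (hF : L * b ≤ F) :
    a * b ≤ 4 * Q * F - 4 * Q * L * b / (1 + a / (Q * L)) := by
  have hP : 0 < Q * L := mul_pos hQ hL
  set l := a / (Q * L) with hldef
  have hl0 : 0 ≤ l := div_nonneg ha hP.le
  have hl1 : l ≤ 1 := (div_le_one hP).2 hab
  have h1l : (0:ℝ) < 1 + l := by linarith
  have hfk := frac_key hl0 (le_refl l) hl1
  have hone : (1:ℝ) / (1 + l - l) = 1 := by norm_num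
  rw [hone] at hfk
  have hmul := mul_le_mul_of_nonneg_left hfk (by positivity : (0:ℝ) ≤ 4 * (Q * L) * b)
  have ea : Q * L * l = a := by rw [hldef]; field_simp
  have expand : 4 * (Q * L) * b * (l / 4 + 1 / (1 + l)) = a * b + 4 * Q * L * b / (1 + l) := by
    rw [← ea]; field_simp
  rw [expand, mul_one] at hmul
  have hF4 : 4 * Q * (L * b) ≤ 4 * Q * F := mul_le_mul_of_nonneg_left hF (by positivity)
  nlinarith [hmul, hF4]

lemma step_arith {Q L a s1 s2 u v F1 F2 T1 T2 : ℝ}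
    (hQ : 0 < Q) (hL : 0 < L) (ha : 0 ≤ a) (hs1 : 0 ≤ s1) (hs2 : 0 ≤ s2)
    (hu : 0 ≤ u) (hv : 0 ≤ v)
    (hcarl : a + s1 + s2 ≤ Q * L)
    (h1 : T1 ≤ 4 * Q * F1 - 4 * Q * (L / 2) * u ^ 2 / (1 + s1 / (Q * (L / 2))))
    (h2 : T2 ≤ 4 * Q * F2 - 4 * Q * (L / 2) * v ^ 2 / (1 + s2 / (Q * (L / 2)))) :
    a * ((u + v) / 2) ^ 2 + T1 + T2 ≤
      4 * Q * (F1 + F2) - 4 * Q * L * ((u + v) / 2) ^ 2 / (1 + (a + s1 + s2) / (Q * L)) := by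
  have hP : 0 < Q * L := mul_pos hQ hL
  have hP2 : 0 < Q * (L / 2) := mul_pos hQ (by linarith)
  set d1 := 1 + s1 / (Q * (L / 2)) with hd1
  set d2 := 1 + s2 / (Q * (L / 2)) with hd2
  have hd1p : 0 < d1 := by have := div_nonneg hs1 hP2.le; rw [hd1]; linarith
  have hd2p : 0 < d2 := by have := div_nonneg hs2 hP2.le; rw [hd2]; linarith
  set l := (a + s1 + s2) / (Q * L) with hldef
  set a' := a / (Q * L) with ha'def
  have hl0 : 0 ≤ l := div_nonneg (by linarith) hP.le
  have hl1 : l ≤ 1 := (div_le_one hP).2 hcarl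
  have ha'0 : 0 ≤ a' := div_nonneg ha hP.le
  have ha'l : a' ≤ l := by
    rw [ha'def, hldef]
    gcongr
    linarith
  have h1l : (0:ℝ) < 1 + l := by linarith
  have h1la : (0:ℝ) < 1 + l - a' := by linarith
  have hfk := frac_key ha'0 ha'l hl1
  have hdd : d1 + d2 = 2 * (1 + l - a') := by
    rw [hd1, hd2, hldef, ha'def]
    field_simp
    ring
  have heng := engel (x := u) (y := v) hd1p hd2p
  have key1 : a * ((u + v) / 2) ^ 2 + 4 * Q * L * ((u + v) / 2) ^ 2 / (1 + l) ≤
      4 * (Q * L) * ((u + v) / 2) ^ 2 / (1 + l - a') := by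
    have hmul := mul_le_mul_of_nonneg_left hfk
      (by positivity : (0:ℝ) ≤ 4 * (Q * L) * ((u + v) / 2) ^ 2)
    have ea : Q * L * a' = a := by rw [ha'def]; field_simp
    calc a * ((u + v) / 2) ^ 2 + 4 * Q * L * ((u + v) / 2) ^ 2 / (1 + l)
        = 4 * (Q * L) * ((u + v) / 2) ^ 2 * (a' / 4 + 1 / (1 + l)) := by
          rw [← ea]; field_simp
      _ ≤ 4 * (Q * L) * ((u + v) / 2) ^ 2 * (1 / (1 + l - a')) := hmul
      _ = 4 * (Q * L) * ((u + v) / 2) ^ 2 / (1 + l - a') := by ring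
  have key2 : 4 * (Q * L) * ((u + v) / 2) ^ 2 / (1 + l - a') ≤
      4 * Q * (L / 2) * u ^ 2 / d1 + 4 * Q * (L / 2) * v ^ 2 / d2 := by
    have hmul := mul_le_mul_of_nonneg_left heng (by positivity : (0:ℝ) ≤ 2 * (Q * L))
    calc 4 * (Q * L) * ((u + v) / 2) ^ 2 / (1 + l - a')
        = 2 * (Q * L) * ((u + v) ^ 2 / (d1 + d2)) := by
          rw [hdd]; field_simp; ring
      _ ≤ 2 * (Q * L) * (u ^ 2 / d1 + v ^ 2 / d2) := hmul
      _ = 4 * Q * (L / 2) * u ^ 2 / d1 + 4 * Q * (L / 2) * v ^ 2 / d2 := by ring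
  linarith [key1, key2, h1, h2]

lemma bellman {f : ℝ → ℝ} (hf0 : ∀ x, 0 ≤ f x)
    (hfi : ∀ I : ℤ × ℤ, IntegrableOn f (dyadicI I) volume)
    (hf2i : ∀ I : ℤ × ℤ, IntegrableOn (fun x => f x ^ 2) (dyadicI I) volume)
    (lam : ℤ × ℤ → ℝ) (hlam : ∀ I, 0 ≤ lam I) {Q : ℝ} (hQpos : 0 < Q)
    (hQ : ∀ (J : ℤ × ℤ) (S : Finset (ℤ × ℤ)), (∀ I ∈ S, dyadicI I ⊆ dyadicI J) →
      (len J)⁻¹ * ∑ I ∈ S, lam I ≤ Q) :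
    ∀ (N : ℕ) (K : ℤ × ℤ) (S : Finset (ℤ × ℤ)),
      (∀ I ∈ S, dyadicI I ⊆ dyadicI K) → (∀ I ∈ S, I.1 ≤ K.1 + N) →
      ∑ I ∈ S, lam I * (avg f I) ^ 2 ≤
        4 * Q * (∫ x in dyadicI K, f x ^ 2) -
          4 * Q * len K * (avg f K) ^ 2 / (1 + (∑ I ∈ S, lam I) / (Q * len K)) := by
  intro N
  induction N with
  | zero =>
    intro K S hsub hdep
    have hL : 0 < len K := len_pos K
    have hSsub : S ⊆ {K} := by
      intro I hI
      have h1 := scale_le_of_subset (hsub I hI)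
      have h2 := hdep I hI
      norm_num at h2
      have : I = K := eq_of_subset_scale_eq (hsub I hI) (le_antisymm h2 h1)
      simp [this]
    have hbase := sq_avg_le (K := K) hf0 (hfi K) (hf2i K)
    rcases Finset.subset_singleton_iff.1 hSsub with hS | hS
    · rw [hS]
      simp only [Finset.sum_empty, zero_div, add_zero, div_one]
      nlinarith [hbase, hQpos.le]
    · rw [hS]
      simp only [Finset.sum_singleton]
      have hcarl : lam K ≤ Q * len K := by
        have h := hQ K {K} (by intro I hI; simp at hI; rw [hI])
        simp only [Finset.sum_singleton] at h
        calc lam K = len K * ((len K)⁻¹ * lam K) := by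
              field_simp
          _ ≤ len K * Q := mul_le_mul_of_nonneg_left h hL.le
          _ = Q * len K := by ring
      exact base_arith hQpos hL (hlam K) hcarl (sq_nonneg _) hbase
  | succ n ih =>
    intro K S hsub hdep
    classical
    have hL : 0 < len K := len_pos K
    set S' := S.filter (fun I => ¬ I = K) with hS'def
    set S1 := S'.filter (fun I => dyadicI I ⊆ dyadicI (leftHalf K)) with hS1def
    set S2 := S'.filter (fun I => ¬ dyadicI I ⊆ dyadicI (leftHalf K)) with hS2def
    set a : ℝ := if K ∈ S then lam K else 0 with hadef
    have ha0 : 0 ≤ a := by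
      rw [hadef]; split
      · exact hlam K
      · exact le_rfl
    have hsplit : ∀ g : ℤ × ℤ → ℝ,
        ∑ I ∈ S, g I = (∑ I ∈ S.filter (fun I => I = K), g I) + (∑ I ∈ S1, g I) + ∑ I ∈ S2, g I := by
      intro g
      rw [hS1def, hS2def, add_assoc, Finset.sum_filter_add_sum_filter_not S' _ g, hS'def,
        Finset.sum_filter_add_sum_filter_not S _ g]
    have heq0 : ∀ g : ℤ × ℤ → ℝ, (∑ I ∈ S.filter (fun I => I = K), g I)
        = if K ∈ S then g K else 0 := by
      intro g
      rw [Finset.filter_eq']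
      split <;> simp
    have hsum_lam : ∑ I ∈ S, lam I = a + (∑ I ∈ S1, lam I) + ∑ I ∈ S2, lam I := by
      rw [hsplit lam, heq0 lam, hadef]
    have hsum_avg : ∑ I ∈ S, lam I * (avg f I) ^ 2
        = a * (avg f K) ^ 2 + (∑ I ∈ S1, lam I * (avg f I) ^ 2)
          + ∑ I ∈ S2, lam I * (avg f I) ^ 2 := by
      rw [hsplit (fun I => lam I * (avg f I) ^ 2), heq0, hadef]
      split <;> simp
    -- S1 facts
    have hS1sub : ∀ I ∈ S1, dyadicI I ⊆ dyadicI (leftHalf K) := by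
      intro I hI
      exact (Finset.mem_filter.1 hI).2
    have hS1dep : ∀ I ∈ S1, I.1 ≤ (leftHalf K).1 + n := by
      intro I hI
      have hIS : I ∈ S := Finset.mem_of_mem_filter I (Finset.mem_of_mem_filter I hI)
      have := hdep I hIS
      have h2 := scale_lt_of_subset_half (Or.inl (hS1sub I hI))
      simp only [leftHalf]
      push_cast at this ⊢
      omega
    -- S2 facts
    have hS2sub : ∀ I ∈ S2, dyadicI I ⊆ dyadicI (rightHalf K) := by
      intro I hI
      have h1 := Finset.mem_filter.1 hI
      have h2 := Finset.mem_filter.1 h1.1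
      have hIS : I ∈ S := h2.1
      rcases dyadic_trichotomy (hsub I hIS) with h | h | h
      · exact absurd h h2.2
      · exact absurd h h1.2
      · exact h
    have hS2dep : ∀ I ∈ S2, I.1 ≤ (rightHalf K).1 + n := by
      intro I hI
      have hIS : I ∈ S := Finset.mem_of_mem_filter I (Finset.mem_of_mem_filter I hI)
      have := hdep I hIS
      have h2 := scale_lt_of_subset_half (Or.inr (hS2sub I hI))
      simp only [rightHalf]
      push_cast at this ⊢
      omega
    have IH1 := ih (leftHalf K) S1 hS1sub hS1dep
    have IH2 := ih (rightHalf K) S2 hS2sub hS2dep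
    rw [len_leftHalf] at IH1
    rw [len_rightHalf] at IH2
    have hcarl : a + (∑ I ∈ S1, lam I) + ∑ I ∈ S2, lam I ≤ Q * len K := by
      rw [← hsum_lam]
      have h := hQ K S hsub
      calc ∑ I ∈ S, lam I = len K * ((len K)⁻¹ * ∑ I ∈ S, lam I) := by
            field_simp
        _ ≤ len K * Q := mul_le_mul_of_nonneg_left h hL.le
        _ = Q * len K := by ring
    have havg : avg f K = (avg f (leftHalf K) + avg f (rightHalf K)) / 2 :=
      avg_halves K (hfi K)
    have hint : (∫ x in dyadicI K, f x ^ 2)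
        = (∫ x in dyadicI (leftHalf K), f x ^ 2) + ∫ x in dyadicI (rightHalf K), f x ^ 2 :=
      integral_halves K (hf2i K)
    rw [hsum_avg, hsum_lam, hint, havg]
    exact step_arith hQpos hL ha0
      (Finset.sum_nonneg fun I _ => hlam I) (Finset.sum_nonneg fun I _ => hlam I)
      (avg_nonneg hf0 _) (avg_nonneg hf0 _) hcarl IH1 IH2

lemma bellman_cor {f : ℝ → ℝ} (hf0 : ∀ x, 0 ≤ f x)
    (hfi : ∀ I : ℤ × ℤ, IntegrableOn f (dyadicI I) volume)
    (hf2i : ∀ I : ℤ × ℤ, IntegrableOn (fun x => f x ^ 2) (dyadicI I) volume)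
    (lam : ℤ × ℤ → ℝ) (hlam : ∀ I, 0 ≤ lam I) {Q : ℝ} (hQpos : 0 < Q)
    (hQ : ∀ (J : ℤ × ℤ) (S : Finset (ℤ × ℤ)), (∀ I ∈ S, dyadicI I ⊆ dyadicI J) →
      (len J)⁻¹ * ∑ I ∈ S, lam I ≤ Q)
    (J : ℤ × ℤ) (S : Finset (ℤ × ℤ)) (hsub : ∀ I ∈ S, dyadicI I ⊆ dyadicI J) :
    ∑ I ∈ S, lam I * (avg f I) ^ 2 ≤ 4 * Q * ∫ x in dyadicI J, f x ^ 2 := by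
  set N : ℕ := S.sup (fun I => (I.1 - J.1).toNat) with hN
  have hdep : ∀ I ∈ S, I.1 ≤ J.1 + N := by
    intro I hI
    have h1 := scale_le_of_subset (hsub I hI)
    have h2 : (I.1 - J.1).toNat ≤ N := Finset.le_sup (f := fun I => (I.1 - J.1).toNat) hI
    omega
  have h := bellman hf0 hfi hf2i lam hlam hQpos hQ N J S hsub hdep
  have hD : 0 ≤ 4 * Q * len J * (avg f J) ^ 2 / (1 + (∑ I ∈ S, lam I) / (Q * len J)) := by
    have hs : 0 ≤ (∑ I ∈ S, lam I) / (Q * len J) :=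
      div_nonneg (Finset.sum_nonneg fun I _ => hlam I) (mul_pos hQpos (len_pos J)).le
    have hnum : 0 ≤ 4 * Q * len J * (avg f J) ^ 2 := by
      have := (len_pos J).le
      positivity
    exact div_nonneg hnum (by linarith)
  linarith

/-- Proposition 1, inequality (4): if `w ∈ A₂^d` and `{λ_I}` is a nonnegative Carleson
sequence with constant `Q`, then `(1/|J|) Σ_{I ∈ D(J)} (m_I w) λ_I ≤ 4 Q ‖w‖_{A₂^d} m_J w`
for every dyadic interval `J`. -/
theorem carleson_weighted_bound'
    (w : ℝ → ℝ) (hwpos : ∀ x, 0 < w x)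
    (hwloc : LocallyIntegrable w volume)
    (hwinvloc : LocallyIntegrable (fun x => (w x)⁻¹) volume)
    (hA2 : BddAbove (Set.range fun I : ℤ × ℤ => avg w I * avg (fun x => (w x)⁻¹) I))
    (lam : ℤ × ℤ → ℝ) (hlam : ∀ I, 0 ≤ lam I) (Q : ℝ)
    (hQ : ∀ (J : ℤ × ℤ) (S : Finset (ℤ × ℤ)), (∀ I ∈ S, dyadicI I ⊆ dyadicI J) →
      (len J)⁻¹ * ∑ I ∈ S, lam I ≤ Q) :
    ∀ (J : ℤ × ℤ) (S : Finset (ℤ × ℤ)), (∀ I ∈ S, dyadicI I ⊆ dyadicI J) →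
      (len J)⁻¹ * ∑ I ∈ S, avg w I * lam I ≤ 4 * Q * A2const w * avg w J := by
  intro J S hsub
  have hQ0 : 0 ≤ Q := by
    have h := hQ J ∅ (by simp)
    simpa using h
  rcases eq_or_lt_of_le hQ0 with hQeq | hQpos
  · -- Q = 0 : all lam vanish
    have hlam0 : ∀ I ∈ S, lam I = 0 := by
      intro I hI
      have h := hQ I {I} (by intro I' hI'; simp at hI'; rw [hI'])
      simp only [Finset.sum_singleton] at h
      rw [← hQeq] at h
      have hlp : 0 < (len I)⁻¹ := inv_pos.2 (len_pos I)
      nlinarith [hlam I]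
    have hzero : ∑ I ∈ S, avg w I * lam I = 0 :=
      Finset.sum_eq_zero fun I hI => by rw [hlam0 I hI, mul_zero]
    rw [hzero, ← hQeq, mul_zero]
    norm_num
  · set f : ℝ → ℝ := fun x => Real.sqrt (w x) with hf
    have hf0 : ∀ x, 0 ≤ f x := fun x => Real.sqrt_nonneg _
    have hfi : ∀ I : ℤ × ℤ, IntegrableOn f (dyadicI I) volume := fun I =>
      integrableOn_sqrt (fun x => (hwpos x).le) (integrableOn_dyadic hwloc I)
    have hsq : (fun x => f x ^ 2) = w := funext fun x => Real.sq_sqrt (hwpos x).le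
    have hf2i : ∀ I : ℤ × ℤ, IntegrableOn (fun x => f x ^ 2) (dyadicI I) volume := fun I => by
      rw [hsq]; exact integrableOn_dyadic hwloc I
    have hbell := bellman_cor hf0 hfi hf2i lam hlam hQpos hQ J S hsub
    rw [hsq] at hbell
    have hA20 : 0 ≤ A2const w :=
      le_trans (mul_nonneg (avg_nonneg (fun x => (hwpos x).le) J)
        (avg_nonneg (fun x => inv_nonneg.2 (hwpos x).le) J)) (le_ciSup hA2 J)
    have hterm : ∀ I ∈ S, avg w I * lam I ≤ A2const w * (lam I * (avg f I) ^ 2) := by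
      intro I hI
      have h := avgw_le hwpos hwloc hwinvloc hA2 I
      calc avg w I * lam I ≤ (A2const w * (avg f I) ^ 2) * lam I :=
            mul_le_mul_of_nonneg_right h (hlam I)
        _ = A2const w * (lam I * (avg f I) ^ 2) := by ring
    have hsum : ∑ I ∈ S, avg w I * lam I ≤ A2const w * ∑ I ∈ S, lam I * (avg f I) ^ 2 := by
      rw [Finset.mul_sum]
      exact Finset.sum_le_sum hterm
    have hchain : ∑ I ∈ S, avg w I * lam I ≤ A2const w * (4 * Q * ∫ x in dyadicI J, w x) :=
      le_trans hsum (mul_le_mul_of_nonneg_left hbell hA20)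
    have hLinv : 0 ≤ (len J)⁻¹ := inv_nonneg.2 (len_pos J).le
    calc (len J)⁻¹ * ∑ I ∈ S, avg w I * lam I
        ≤ (len J)⁻¹ * (A2const w * (4 * Q * ∫ x in dyadicI J, w x)) :=
          mul_le_mul_of_nonneg_left hchain hLinv
      _ = 4 * Q * A2const w * ((len J)⁻¹ * ∫ x in dyadicI J, w x) := by ring
      _ = 4 * Q * A2const w * avg w J := rfl
end
end

section
/- There is an absolute constant C > 0 such that for every weight w ∈ A₂^d and every dyadic interval J, (1/|J|) Σ_{I∈D(J)} ((m_{I⁺}w − m_{I⁻}w)/m_I w)² · |I| · (m_I w)^{1/4} (m_I w⁻¹)^{1/4} ≤ C · (m_J w)^{1/4} (m_J w⁻¹)^{1/4}. -/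
open MeasureTheory Set

noncomputable section

lemma dyadicI_lt (I : ℤ × ℤ) :
    ((I.2 : ℝ) * 2 ^ (-I.1)) < (((I.2 : ℝ) + 1) * 2 ^ (-I.1)) := by
  have : (0:ℝ) < 2 ^ (-I.1) := by positivity
  nlinarith

lemma left_start (I : ℤ × ℤ) :
    (((leftHalf I).2 : ℝ)) * 2 ^ (-(leftHalf I).1) = (I.2 : ℝ) * 2 ^ (-I.1) := by
  simp only [leftHalf]
  push_cast
  rw [show -(I.1 + 1) = -I.1 + (-1) by ring, zpow_add₀ (two_ne_zero)]
  ring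

lemma mid_eq (I : ℤ × ℤ) :
    (((leftHalf I).2 : ℝ) + 1) * 2 ^ (-(leftHalf I).1)
      = ((rightHalf I).2 : ℝ) * 2 ^ (-(rightHalf I).1) := by
  simp only [leftHalf, rightHalf]
  push_cast
  ring

lemma right_end (I : ℤ × ℤ) :
    (((rightHalf I).2 : ℝ) + 1) * 2 ^ (-(rightHalf I).1) = ((I.2 : ℝ) + 1) * 2 ^ (-I.1) := by
  simp only [rightHalf]
  push_cast
  rw [show -(I.1 + 1) = -I.1 + (-1) by ring, zpow_add₀ (two_ne_zero)]
  ring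

lemma dyadicI_split (I : ℤ × ℤ) :
    dyadicI (leftHalf I) ∪ dyadicI (rightHalf I) = dyadicI I := by
  unfold dyadicI
  rw [mid_eq, left_start]
  rw [show (((rightHalf I).2 : ℝ) + 1) * 2 ^ (-(rightHalf I).1) = ((I.2 : ℝ) + 1) * 2 ^ (-I.1)
    from right_end I]
  apply Set.Ico_union_Ico_eq_Ico
  · have h1 := dyadicI_lt (leftHalf I)
    rw [left_start, mid_eq] at h1
    exact h1.le
  · have h2 := dyadicI_lt (rightHalf I)
    rw [right_end] at h2
    exact h2.le

lemma integrableOn_dyadicI {f : ℝ → ℝ} (hf : LocallyIntegrable f volume) (I : ℤ × ℤ) :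
    IntegrableOn f (dyadicI I) volume :=
  (hf.integrableOn_isCompact isCompact_Icc).mono_set Set.Ico_subset_Icc_self

lemma avg_pos {f : ℝ → ℝ} (hf : ∀ x, 0 < f x) (hfi : LocallyIntegrable f volume) (I : ℤ × ℤ) :
    0 < avg f I := by
  apply mul_pos (inv_pos.mpr (len_pos I))
  rw [setIntegral_pos_iff_support_of_nonneg_ae
      (Filter.Eventually.of_forall fun x => (hf x).le) (integrableOn_dyadicI hfi I)]
  have : Function.support f ∩ dyadicI I = dyadicI I := by
    ext x; simp [Function.support, (hf x).ne']
  rw [this]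
  simpa [dyadicI] using dyadicI_lt I

lemma len_half (I : ℤ × ℤ) : len (leftHalf I) = len I / 2 := by
  unfold len leftHalf
  rw [show -(I.1 + 1) = -I.1 + (-1) by ring, zpow_add₀ (two_ne_zero)]
  simp
  ring

lemma len_half' (I : ℤ × ℤ) : len (rightHalf I) = len I / 2 := by
  unfold len rightHalf
  rw [show -(I.1 + 1) = -I.1 + (-1) by ring, zpow_add₀ (two_ne_zero)]
  simp
  ring

lemma avg_halves_s5 {f : ℝ → ℝ} (hfi : LocallyIntegrable f volume) (I : ℤ × ℤ) :
    avg f I = (avg f (leftHalf I) + avg f (rightHalf I)) / 2 := by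
  have hdisj : Disjoint (dyadicI (leftHalf I)) (dyadicI (rightHalf I)) := by
    unfold dyadicI
    rw [mid_eq]
    exact Set.Ico_disjoint_Ico_same
  have := setIntegral_union (f := f) (μ := volume) hdisj measurableSet_Ico
    (integrableOn_dyadicI hfi (leftHalf I)) (integrableOn_dyadicI hfi (rightHalf I))
  unfold avg
  rw [← dyadicI_split I, this, len_half, len_half']
  have h := (len_pos I).ne'
  field_simp


lemma sqrt_sum_le (a b : ℝ) (ha : 0 ≤ a) (hb : 0 ≤ b) (hab : a + b = 2) :
    Real.sqrt a + Real.sqrt b ≤ 2 - (a - b)^2 / 16 := by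
  set x := Real.sqrt a with hxdef
  set y := Real.sqrt b with hydef
  have hx : 0 ≤ x := Real.sqrt_nonneg a
  have hy : 0 ≤ y := Real.sqrt_nonneg b
  have hx2 : x^2 = a := Real.sq_sqrt ha
  have hy2 : y^2 = b := Real.sq_sqrt hb
  have h2 : x^2 + y^2 = 2 := by rw [hx2, hy2]; exact hab
  have hs : 0 ≤ (x+y)^2 + 4*(x+y) + 8 := by nlinarith
  have key : 0 ≤ (x+y-2)^2 * ((x+y)^2 + 4*(x+y) + 8) := mul_nonneg (sq_nonneg _) hs
  have hab' : a - b = x^2 - y^2 := by rw [hx2, hy2]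
  rw [hab']
  nlinarith [sq_nonneg (x-y), sq_nonneg (x+y), mul_nonneg hx hy]

lemma quarter_mul_le (a c : ℝ) (ha : 0 ≤ a) (hc : 0 ≤ c) :
    a ^ (1/4 : ℝ) * c ^ (1/4 : ℝ) ≤ (Real.sqrt a + Real.sqrt c) / 2 := by
  have h1 : (a ^ (1/4 : ℝ))^2 = Real.sqrt a := by
    rw [← Real.rpow_natCast (a ^ (1/4:ℝ)) 2, ← Real.rpow_mul ha, Real.sqrt_eq_rpow]
    norm_num
  have h2 : (c ^ (1/4 : ℝ))^2 = Real.sqrt c := by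
    rw [← Real.rpow_natCast (c ^ (1/4:ℝ)) 2, ← Real.rpow_mul hc, Real.sqrt_eq_rpow]
    norm_num
  nlinarith [sq_nonneg (a ^ (1/4:ℝ) - c ^ (1/4:ℝ))]

lemma bellman_scalar (a b c d : ℝ) (ha : 0 ≤ a) (hb : 0 ≤ b) (hc : 0 ≤ c) (hd : 0 ≤ d)
    (hab : a + b = 2) (hcd : c + d = 2) :
    a ^ (1/4:ℝ) * c ^ (1/4:ℝ) + b ^ (1/4:ℝ) * d ^ (1/4:ℝ) ≤ 2 - (a-b)^2/32 := by
  have h1 := quarter_mul_le a c ha hc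
  have h2 := quarter_mul_le b d hb hd
  have h3 := sqrt_sum_le a b ha hb hab
  have h4 := sqrt_sum_le c d hc hd hcd
  have h5 : 0 ≤ (c - d)^2 / 16 := by positivity
  linarith

lemma bellman_s5 (up um vp vm : ℝ) (hup : 0 < up) (hum : 0 < um) (hvp : 0 < vp) (hvm : 0 < vm) :
    (up ^ (1/4:ℝ) * vp ^ (1/4:ℝ) + um ^ (1/4:ℝ) * vm ^ (1/4:ℝ)) / 2
      ≤ ((up+um)/2) ^ (1/4:ℝ) * ((vp+vm)/2) ^ (1/4:ℝ) *
        (1 - (1/64) * ((up - um) / ((up+um)/2))^2) := by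
  set u := (up+um)/2 with hu
  set v := (vp+vm)/2 with hv
  have hu0 : 0 < u := by positivity
  have hv0 : 0 < v := by positivity
  set a := up / u with hadef
  set b := um / u with hbdef
  set c := vp / v with hcdef
  set d := vm / v with hddef
  have hab : a + b = 2 := by rw [hadef, hbdef, ← add_div, div_eq_iff hu0.ne', hu]; ring
  have hcd : c + d = 2 := by rw [hcdef, hddef, ← add_div, div_eq_iff hv0.ne', hv]; ring
  have hB := bellman_scalar a b c d (by positivity) (by positivity) (by positivity) (by positivity) hab hcd
  have hua : up = u * a := by rw [hadef, mul_div_assoc', eq_div_iff hu0.ne', mul_comm]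
  have hub : um = u * b := by rw [hbdef, mul_div_assoc', eq_div_iff hu0.ne', mul_comm]
  have hvc : vp = v * c := by rw [hcdef, mul_div_assoc', eq_div_iff hv0.ne', mul_comm]
  have hvd : vm = v * d := by rw [hddef, mul_div_assoc', eq_div_iff hv0.ne', mul_comm]
  have e1 : up ^ (1/4:ℝ) = u ^ (1/4:ℝ) * a ^ (1/4:ℝ) := by
    rw [hua, Real.mul_rpow hu0.le (by positivity)]
  have e2 : um ^ (1/4:ℝ) = u ^ (1/4:ℝ) * b ^ (1/4:ℝ) := by
    rw [hub, Real.mul_rpow hu0.le (by positivity)]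
  have e3 : vp ^ (1/4:ℝ) = v ^ (1/4:ℝ) * c ^ (1/4:ℝ) := by
    rw [hvc, Real.mul_rpow hv0.le (by positivity)]
  have e4 : vm ^ (1/4:ℝ) = v ^ (1/4:ℝ) * d ^ (1/4:ℝ) := by
    rw [hvd, Real.mul_rpow hv0.le (by positivity)]
  have habd : (up - um) / u = a - b := by rw [hadef, hbdef, sub_div]
  rw [e1, e2, e3, e4, habd]
  have hpos : 0 < u ^ (1/4:ℝ) * v ^ (1/4:ℝ) := by positivity
  calc (u ^ (1/4:ℝ) * a ^ (1/4:ℝ) * (v ^ (1/4:ℝ) * c ^ (1/4:ℝ)) +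
        u ^ (1/4:ℝ) * b ^ (1/4:ℝ) * (v ^ (1/4:ℝ) * d ^ (1/4:ℝ))) / 2
      = u ^ (1/4:ℝ) * v ^ (1/4:ℝ) *
          ((a ^ (1/4:ℝ) * c ^ (1/4:ℝ) + b ^ (1/4:ℝ) * d ^ (1/4:ℝ)) / 2) := by ring
    _ ≤ u ^ (1/4:ℝ) * v ^ (1/4:ℝ) * ((2 - (a-b)^2/32)/2) := by
        apply mul_le_mul_of_nonneg_left _ hpos.le
        linarith
    _ = u ^ (1/4:ℝ) * v ^ (1/4:ℝ) * (1 - 1/64 * (a-b)^2) := by ring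




/-- Generation `n` descendants of `J`. -/
def Gen (J : ℤ × ℤ) (n : ℕ) : Finset (ℤ × ℤ) :=
  (Finset.range (2^n)).image fun m : ℕ => (J.1 + (n:ℤ), (2:ℤ)^n * J.2 + (m:ℤ))

lemma Gen_inj (J : ℤ × ℤ) (n : ℕ) : ∀ m1 ∈ Finset.range (2^n), ∀ m2 ∈ Finset.range (2^n),
    (J.1 + (n:ℤ), (2:ℤ)^n * J.2 + (m1:ℤ)) = (J.1 + (n:ℤ), (2:ℤ)^n * J.2 + (m2:ℤ)) → m1 = m2 := by
  intro m1 _ m2 _ h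
  have := (Prod.mk.injEq _ _ _ _).mp h
  have h2 : (m1:ℤ) = m2 := by linarith [this.2]
  exact_mod_cast h2

lemma sum_range_double (K : ℕ) (F : ℕ → ℝ) :
    ∑ m ∈ Finset.range (2*K), F m = ∑ m ∈ Finset.range K, (F (2*m) + F (2*m+1)) := by
  induction K with
  | zero => simp
  | succ k ih =>
    rw [Finset.sum_range_succ, ← ih, show 2*(k+1) = (2*k+1)+1 by ring,
      Finset.sum_range_succ, Finset.sum_range_succ]
    ring

lemma sum_Gen_succ (J : ℤ × ℤ) (n : ℕ) (Φ : ℤ × ℤ → ℝ) :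
    ∑ I ∈ Gen J (n+1), Φ I = ∑ I ∈ Gen J n, (Φ (leftHalf I) + Φ (rightHalf I)) := by
  unfold Gen
  rw [Finset.sum_image (Gen_inj J (n+1)), Finset.sum_image (Gen_inj J n)]
  rw [show 2^(n+1) = 2 * 2^n by ring, sum_range_double]
  apply Finset.sum_congr rfl
  intro m _
  have h1 : leftHalf (J.1 + (n:ℤ), 2^n * J.2 + (m:ℤ)) = (J.1 + ((n+1:ℕ):ℤ), 2^(n+1) * J.2 + ((2*m:ℕ):ℤ)) := by
    unfold leftHalf
    refine Prod.ext ?_ ?_ <;> push_cast <;> ring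
  have h2 : rightHalf (J.1 + (n:ℤ), 2^n * J.2 + (m:ℤ)) = (J.1 + ((n+1:ℕ):ℤ), 2^(n+1) * J.2 + ((2*m+1:ℕ):ℤ)) := by
    unfold rightHalf
    refine Prod.ext ?_ ?_ <;> push_cast <;> ring
  rw [h1, h2]

lemma Gen_zero (J : ℤ × ℤ) (Φ : ℤ × ℤ → ℝ) : ∑ I ∈ Gen J 0, Φ I = Φ J := by
  unfold Gen
  simp

lemma telescope (J : ℤ × ℤ) (Φ : ℤ × ℤ → ℝ) (N : ℕ) :
    ∑ n ∈ Finset.range N, ∑ I ∈ Gen J n, (Φ I - Φ (leftHalf I) - Φ (rightHalf I))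
      = Φ J - ∑ I ∈ Gen J N, Φ I := by
  induction N with
  | zero => simp [Gen_zero]
  | succ k ih =>
    rw [Finset.sum_range_succ, ih, sum_Gen_succ J k Φ]
    rw [Finset.sum_sub_distrib, Finset.sum_sub_distrib, Finset.sum_add_distrib]
    ring

lemma Gen_disjoint (J : ℤ × ℤ) {n n' : ℕ} (h : n ≠ n') : Disjoint (Gen J n) (Gen J n') := by
  rw [Finset.disjoint_left]
  intro I hI hI'
  unfold Gen at hI hI'
  simp only [Finset.mem_image, Finset.mem_range] at hI hI'
  obtain ⟨m, _, rfl⟩ := hI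
  obtain ⟨m', _, he⟩ := hI'
  have := (Prod.mk.injEq _ _ _ _).mp he
  have : (n':ℤ) = n := by linarith [this.1]
  exact h (by exact_mod_cast this.symm)

lemma mem_Gen_of_subset {I J : ℤ × ℤ} (h : dyadicI I ⊆ dyadicI J) :
    I ∈ Gen J (I.1 - J.1).toNat := by
  obtain ⟨j, k⟩ := I
  obtain ⟨j', k'⟩ := J
  simp only at *
  rw [dyadicI, dyadicI, Set.Ico_subset_Ico_iff (dyadicI_lt (j,k))] at h
  obtain ⟨h1, h2⟩ := h
  simp only at h1 h2
  have hlen : (2:ℝ) ^ (-j) ≤ 2 ^ (-j') := by nlinarith [h1, h2]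
  have hj : j' ≤ j := by
    have := (zpow_le_zpow_iff_right₀ (by norm_num : (1:ℝ) < 2)).mp hlen
    omega
  set n := (j - j').toNat with hn
  have hnz : (n:ℤ) = j - j' := Int.toNat_of_nonneg (by omega)
  have hp : (0:ℝ) < 2 ^ j := by positivity
  have hpow : (2:ℝ) ^ (-j') * 2 ^ j = 2 ^ n := by
    rw [← zpow_natCast (2:ℝ) n, hnz, ← zpow_add₀ (two_ne_zero)]
    ring_nf
  have hk1 : (k':ℝ) * 2 ^ n ≤ k := by
    have := mul_le_mul_of_nonneg_right h1 hp.le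
    rw [mul_assoc, mul_assoc, hpow] at this
    have hjj : (2:ℝ) ^ (-j) * 2 ^ j = 1 := by
      rw [← zpow_add₀ (two_ne_zero)]; simp
    rw [hjj, mul_one] at this
    exact this
  have hk2 : (k:ℝ) + 1 ≤ ((k':ℝ) + 1) * 2 ^ n := by
    have := mul_le_mul_of_nonneg_right h2 hp.le
    rw [mul_assoc, mul_assoc, hpow] at this
    have hjj : (2:ℝ) ^ (-j) * 2 ^ j = 1 := by
      rw [← zpow_add₀ (two_ne_zero)]; simp
    rw [hjj, mul_one] at this
    exact this
  have hk1' : k' * 2 ^ n ≤ k := by exact_mod_cast hk1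
  have hk2' : k + 1 ≤ (k' + 1) * 2 ^ n := by exact_mod_cast hk2
  unfold Gen
  simp only [Finset.mem_image, Finset.mem_range]
  have hexp : (k' + 1) * (2:ℤ) ^ n = k' * 2 ^ n + 2 ^ n := by ring
  refine ⟨(k - k' * 2 ^ n).toNat, ?_, ?_⟩
  · have : ((k - k' * 2 ^ n).toNat : ℤ) < (2:ℤ)^n := by
      rw [Int.toNat_of_nonneg (by omega)]
      omega
    exact_mod_cast this
  · refine Prod.ext ?_ ?_
    · simp; omega
    · simp only
      rw [Int.toNat_of_nonneg (by omega)]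
      ring

/-- Proposition 2: for `w ∈ A₂^d`,
`(1/|J|) Σ_{I∈D(J)} ((m_{I⁺}w − m_{I⁻}w)/m_I w)² |I| (m_I w)^{1/4} (m_I w⁻¹)^{1/4}
  ≤ C (m_J w)^{1/4} (m_J w⁻¹)^{1/4}`. -/
theorem prop_sum1
    : ∃ C : ℝ, 0 < C ∧ ∀ (w : ℝ → ℝ), (∀ x, 0 < w x) →
      LocallyIntegrable w volume →
      LocallyIntegrable (fun x => (w x)⁻¹) volume →
      BddAbove (Set.range fun I : ℤ × ℤ => avg w I * avg (fun x => (w x)⁻¹) I) →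
      ∀ (J : ℤ × ℤ) (S : Finset (ℤ × ℤ)), (∀ I ∈ S, dyadicI I ⊆ dyadicI J) →
        (len J)⁻¹ * ∑ I ∈ S,
            ((avg w (leftHalf I) - avg w (rightHalf I)) / avg w I) ^ 2 * len I *
              (avg w I) ^ ((1 : ℝ)/4) * (avg (fun x => (w x)⁻¹) I) ^ ((1 : ℝ)/4)
          ≤ C * (avg w J) ^ ((1 : ℝ)/4) * (avg (fun x => (w x)⁻¹) J) ^ ((1 : ℝ)/4) := by
  refine ⟨64, by norm_num, ?_⟩
  intro w hw hwi hvi _ J S hS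
  set g := fun x => (w x)⁻¹ with hg
  have hg0 : ∀ x, 0 < g x := fun x => inv_pos.mpr (hw x)
  set Φ : ℤ × ℤ → ℝ :=
    fun I => len I * ((avg w I) ^ ((1:ℝ)/4) * (avg g I) ^ ((1:ℝ)/4)) with hΦ
  have hwpos : ∀ I, 0 < avg w I := avg_pos hw hwi
  have hgpos : ∀ I, 0 < avg g I := avg_pos hg0 hvi
  have hΦpos : ∀ I, 0 < Φ I := by
    intro I
    have h1 := hwpos I
    have h2 := hgpos I
    have h3 := len_pos I
    positivity
  have hdef : ∀ I : ℤ × ℤ,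
      ((avg w (leftHalf I) - avg w (rightHalf I)) / avg w I) ^ 2 * len I *
          (avg w I) ^ ((1:ℝ)/4) * (avg g I) ^ ((1:ℝ)/4)
        ≤ 64 * (Φ I - Φ (leftHalf I) - Φ (rightHalf I)) := by
    intro I
    have hb := bellman_s5 (avg w (leftHalf I)) (avg w (rightHalf I))
      (avg g (leftHalf I)) (avg g (rightHalf I))
      (hwpos _) (hwpos _) (hgpos _) (hgpos _)
    have hw2 : avg w I = (avg w (leftHalf I) + avg w (rightHalf I)) / 2 := avg_halves_s5 hwi I
    have hg2 : avg g I = (avg g (leftHalf I) + avg g (rightHalf I)) / 2 := avg_halves_s5 hvi I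
    rw [← hw2, ← hg2] at hb
    have hl := len_pos I
    have hΦeq : Φ I - Φ (leftHalf I) - Φ (rightHalf I)
        = len I * ((avg w I) ^ ((1:ℝ)/4) * (avg g I) ^ ((1:ℝ)/4)
            - ((avg w (leftHalf I)) ^ ((1:ℝ)/4) * (avg g (leftHalf I)) ^ ((1:ℝ)/4)
              + (avg w (rightHalf I)) ^ ((1:ℝ)/4) * (avg g (rightHalf I)) ^ ((1:ℝ)/4)) / 2) := by
      simp only [hΦ, len_half, len_half']
      ring
    rw [hΦeq]
    have hB : (0:ℝ) < (avg w I) ^ ((1:ℝ)/4) * (avg g I) ^ ((1:ℝ)/4) := by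
      have := hwpos I
      have := hgpos I
      positivity
    nlinarith [mul_le_mul_of_nonneg_left hb hl.le]
  have htermpos : ∀ I : ℤ × ℤ, 0 ≤
      ((avg w (leftHalf I) - avg w (rightHalf I)) / avg w I) ^ 2 * len I *
          (avg w I) ^ ((1:ℝ)/4) * (avg g I) ^ ((1:ℝ)/4) := by
    intro I
    have h1 := hwpos I
    have h2 := hgpos I
    have h3 := len_pos I
    positivity
  have hδ0 : ∀ I : ℤ × ℤ, 0 ≤ Φ I - Φ (leftHalf I) - Φ (rightHalf I) := by
    intro I
    have := le_trans (htermpos I) (hdef I)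
    linarith
  set N := S.sup (fun I => (I.1 - J.1).toNat) + 1 with hN
  have hsub : S ⊆ (Finset.range N).biUnion (Gen J) := by
    intro I hI
    rw [Finset.mem_biUnion]
    exact ⟨(I.1 - J.1).toNat,
      Finset.mem_range.mpr (Nat.lt_succ_of_le
        (Finset.le_sup (f := fun I => (I.1 - J.1).toNat) hI)),
      mem_Gen_of_subset (hS I hI)⟩
  have hstep1 : ∑ I ∈ S,
      ((avg w (leftHalf I) - avg w (rightHalf I)) / avg w I) ^ 2 * len I *
          (avg w I) ^ ((1:ℝ)/4) * (avg g I) ^ ((1:ℝ)/4)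
      ≤ ∑ I ∈ S, 64 * (Φ I - Φ (leftHalf I) - Φ (rightHalf I)) :=
    Finset.sum_le_sum fun I _ => hdef I
  have hstep2 : ∑ I ∈ S, 64 * (Φ I - Φ (leftHalf I) - Φ (rightHalf I))
      ≤ ∑ I ∈ (Finset.range N).biUnion (Gen J), 64 * (Φ I - Φ (leftHalf I) - Φ (rightHalf I)) :=
    Finset.sum_le_sum_of_subset_of_nonneg hsub
      (fun I _ _ => by have := hδ0 I; linarith)
  have hdisj : (↑(Finset.range N) : Set ℕ).PairwiseDisjoint (Gen J) :=
    fun n _ n' _ hne => Gen_disjoint J hne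
  have hstep3 : ∑ I ∈ (Finset.range N).biUnion (Gen J),
        64 * (Φ I - Φ (leftHalf I) - Φ (rightHalf I)) ≤ 64 * Φ J := by
    rw [Finset.sum_biUnion hdisj]
    have heq : ∀ n, ∑ I ∈ Gen J n, 64 * (Φ I - Φ (leftHalf I) - Φ (rightHalf I))
        = 64 * ∑ I ∈ Gen J n, (Φ I - Φ (leftHalf I) - Φ (rightHalf I)) := by
      intro n; rw [Finset.mul_sum]
    simp_rw [heq]
    rw [← Finset.mul_sum, telescope J Φ N]
    have hΦN : 0 ≤ ∑ I ∈ Gen J N, Φ I :=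
      Finset.sum_nonneg fun I _ => (hΦpos I).le
    linarith
  have htotal := le_trans hstep1 (le_trans hstep2 hstep3)
  have hlJ := len_pos J
  calc (len J)⁻¹ * ∑ I ∈ S,
        ((avg w (leftHalf I) - avg w (rightHalf I)) / avg w I) ^ 2 * len I *
          (avg w I) ^ ((1:ℝ)/4) * (avg g I) ^ ((1:ℝ)/4)
      ≤ (len J)⁻¹ * (64 * Φ J) := by
        apply mul_le_mul_of_nonneg_left htotal (inv_pos.mpr hlJ).le
    _ = 64 * (avg w J) ^ ((1:ℝ)/4) * (avg g J) ^ ((1:ℝ)/4) := by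
        simp only [hΦ]
        field_simp
end
end
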